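/- Let W be as in the context. Then for every t ∈ (0,T) and every x ∈ H with ⟨α,x⟩ = 0, the superdifferential of W at (t,x) is exactly D^{1,+}W(t,x) = { ( (1/2)⟨β,α⟩² G(t)² , γ G(t) α ) : γ ∈ [−1,1] }. -/

import Mathlib

open scoped InnerProductSpace

/-- `G(t) = ∫_t^T e^{λ(s−t)} ds`. -/
noncomputable def Gfun (T lam : ℝ) (t : ℝ) : ℝ := ∫ s in t..T, Real.exp (lam * (s - t))

/-- The glued candidate value function of the example of Section 3.1:
`W(t,x) = −G(t)|⟨α,x⟩| − ∫_t^T (1/2)⟨β,α⟩² G(s)² ds`. -/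
noncomputable def Wfun {H : Type*} [NormedAddCommGroup H] [InnerProductSpace ℝ H]
    (T lam : ℝ) (α β : H) (t : ℝ) (x : H) : ℝ :=
  -(Gfun T lam t * |⟪α, x⟫_ℝ|) - ∫ s in t..T, (1 / 2) * ⟪β, α⟫_ℝ ^ 2 * (Gfun T lam s) ^ 2

/-- The superdifferential `D^{1,+}v(t,x)` of a function `v : (0,T) × H → ℝ` at `(t,x)`:
pairs `(a,p) ∈ ℝ × H` such that
`v(s,y) − v(t,x) − ⟨p, y−x⟩ − a(s−t) ≤ o(‖y−x‖ + |s−t|)` as `(s,y) → (t,x)`. -/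
def superDiff {H : Type*} [NormedAddCommGroup H] [InnerProductSpace ℝ H]
    (T : ℝ) (v : ℝ → H → ℝ) (t : ℝ) (x : H) : Set (ℝ × H) :=
  { ap : ℝ × H | ∀ δ > (0 : ℝ), ∃ η > (0 : ℝ), ∀ s ∈ Set.Ioo (0 : ℝ) T, ∀ y : H,
      |s - t| < η → ‖y - x‖ < η →
        v s y - v t x - ⟪ap.2, y - x⟫_ℝ - ap.1 * (s - t) ≤ δ * (‖y - x‖ + |s - t|) }

lemma primitive_hasDerivAt (f : ℝ → ℝ) (hf : Continuous f) (T t : ℝ) :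
    HasDerivAt (fun u => ∫ s in u..T, f s) (-(f t)) t := by
  have h1 : (fun u => ∫ s in u..T, f s)
      = fun u => (∫ s in (0:ℝ)..T, f s) - ∫ s in (0:ℝ)..u, f s := by
    funext u
    rw [eq_sub_iff_add_eq, add_comm]
    exact intervalIntegral.integral_add_adjacent_intervals
      (hf.intervalIntegrable _ _) (hf.intervalIntegrable _ _)
  rw [h1]
  have h2 : HasDerivAt (fun u => ∫ s in (0:ℝ)..u, f s) (f t) t :=
    (hf.integral_hasStrictDerivAt 0 t).hasDerivAt
  exact h2.const_sub _

lemma Gfun_eq (T lam t : ℝ) :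
    Gfun T lam t = Real.exp (-(lam*t)) * ∫ s in t..T, Real.exp (lam*s) := by
  unfold Gfun
  rw [← intervalIntegral.integral_const_mul]
  apply intervalIntegral.integral_congr
  intro s _
  simp only [← Real.exp_add]
  ring_nf

lemma Gfun_continuous (T lam : ℝ) : Continuous (Gfun T lam) := by
  have h : Gfun T lam = fun t => Real.exp (-(lam*t)) * ∫ s in t..T, Real.exp (lam*s) :=
    funext (Gfun_eq T lam)
  rw [h]
  apply Continuous.mul
  · exact Real.continuous_exp.comp (by fun_prop)
  · apply continuous_iff_continuousAt.mpr
    intro t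
    exact (primitive_hasDerivAt _ (by fun_prop) T t).continuousAt

lemma Gfun_pos (T lam t : ℝ) (h : t < T) : 0 < Gfun T lam t := by
  apply intervalIntegral.intervalIntegral_pos_of_pos_on
  · exact Continuous.intervalIntegrable (by fun_prop) _ _
  · intro s _; exact Real.exp_pos _
  · exact h

lemma deriv_eps {F : ℝ → ℝ} {d t : ℝ} (h : HasDerivAt F d t) {δ : ℝ} (hδ : 0 < δ) :
    ∃ η > 0, ∀ s : ℝ, |s - t| < η → |F s - F t - (s - t) * d| ≤ δ * |s - t| := by
  have h2 := (hasDerivAt_iff_isLittleO.mp h).def hδ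
  rw [Metric.eventually_nhds_iff] at h2
  obtain ⟨η, hη, h3⟩ := h2
  refine ⟨η, hη, fun s hs => ?_⟩
  have := h3 (y := s) (by rwa [Real.dist_eq])
  simpa [Real.norm_eq_abs, smul_eq_mul, mul_comm] using this

lemma le_of_forall_eps {a : ℝ} (h : ∀ ε > (0:ℝ), a ≤ ε) : a ≤ 0 := by
  by_contra hc
  push_neg at hc
  have := h (a/2) (by linarith)
  linarith


/-- On the hyperplane `⟨α,x⟩ = 0`, the superdifferential of `W` at `(t,x)` is exactly
`{ ((1/2)⟨β,α⟩² G(t)², γ G(t) α ) : γ ∈ [−1,1] }`. -/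
theorem superdiff_of_W
    {H : Type*} [NormedAddCommGroup H] [InnerProductSpace ℝ H] [CompleteSpace H]
    [TopologicalSpace.SeparableSpace H]
    (T lam : ℝ) (hT : 0 < T) (α β : H) (hα : α ≠ 0)
    (t : ℝ) (ht : t ∈ Set.Ioo (0 : ℝ) T) (x : H) (hx : ⟪α, x⟫_ℝ = 0) :
    superDiff T (Wfun T lam α β) t x =
      { ap : ℝ × H | ∃ γ ∈ Set.Icc (-1 : ℝ) 1,
          ap = ((1 / 2) * ⟪β, α⟫_ℝ ^ 2 * (Gfun T lam t) ^ 2, (γ * Gfun T lam t) • α) } := by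
  obtain ⟨ht0, htT⟩ := ht
  have hGcont : Continuous (Gfun T lam) := Gfun_continuous T lam
  have hGt : 0 < Gfun T lam t := Gfun_pos T lam t htT
  have hαn : (0:ℝ) < ‖α‖ := norm_pos_iff.mpr hα
  obtain ⟨F, hW, hFd⟩ : ∃ F : ℝ → ℝ,
      (∀ (s : ℝ) (y : H), Wfun T lam α β s y = -(Gfun T lam s * |⟪α, y⟫_ℝ|) - F s) ∧
      HasDerivAt F (-((1 / 2) * ⟪β, α⟫_ℝ ^ 2 * (Gfun T lam t)^2)) t :=
    ⟨fun u => ∫ s in u..T, (1 / 2) * ⟪β, α⟫_ℝ ^ 2 * (Gfun T lam s) ^ 2,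
      fun _ _ => rfl,
      primitive_hasDerivAt _ (continuous_const.mul ((Gfun_continuous T lam).pow 2)) T t⟩
  have hWx : ∀ s : ℝ, Wfun T lam α β s x = - F s := by
    intro s; rw [hW, hx]; simp
  ext ⟨a, p⟩
  simp only [superDiff, Set.mem_setOf_eq]
  constructor
  · -- hard direction
    intro h
    -- Step A
    have stepA : ∀ z : H, ⟪α, z⟫_ℝ = 0 → ⟪p, z⟫_ℝ = 0 := by
      have key : ∀ z : H, ⟪α, z⟫_ℝ = 0 → 0 ≤ ⟪p, z⟫_ℝ := by
        intro z hz
        rcases eq_or_ne z 0 with rfl | hz0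
        · simp
        have hzn : 0 < ‖z‖ := norm_pos_iff.mpr hz0
        have hle : -⟪p, z⟫_ℝ ≤ 0 := by
          apply le_of_forall_eps
          intro ε hε
          obtain ⟨η, hη, hsup⟩ := h (ε / ‖z‖) (by positivity)
          set r : ℝ := η / (2 * ‖z‖) with hr
          have hr0 : 0 < r := by positivity
          have hyx : (x + r • z) - x = r • z := by abel
          have hnyx : ‖(x + r • z) - x‖ = r * ‖z‖ := by
            rw [hyx, norm_smul, Real.norm_eq_abs, abs_of_pos hr0]
          have hre : r * ‖z‖ = η / 2 := by
            rw [hr]; field_simp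
          have hlt : ‖(x + r • z) - x‖ < η := by
            rw [hnyx, hre]; linarith
          have hcond := hsup t ⟨ht0, htT⟩ (x + r • z) (by simpa using hη) hlt
          have hay : ⟪α, x + r • z⟫_ℝ = 0 := by
            rw [inner_add_right, real_inner_smul_right, hx, hz]; ring
          rw [hW, hWx, hay, hnyx, hyx, real_inner_smul_right] at hcond
          simp only [abs_zero, mul_zero, neg_zero, zero_sub, sub_self, abs_zero, add_zero] at hcond
          -- hcond : -F t - -F t - r * ⟪p,z⟫ - a * 0 ≤ ε/‖z‖ * (r‖z‖)
          have h2 : -(r * ⟪p, z⟫_ℝ) ≤ ε / ‖z‖ * (r * ‖z‖) := by linarith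
          have h3 : ε / ‖z‖ * (r * ‖z‖) = ε * r := by field_simp
          rw [h3] at h2
          nlinarith
        linarith
      intro z hz
      have h1 := key z hz
      have h2 := key (-z) (by rw [inner_neg_right, hz]; ring)
      rw [inner_neg_right] at h2
      linarith
    -- Step B
    have hp : p = (⟪α, p⟫_ℝ / ‖α‖^2) • α := by
      set γ' : ℝ := ⟪α, p⟫_ℝ / ‖α‖^2 with hγ'
      have hz : ⟪α, p - γ' • α⟫_ℝ = 0 := by
        rw [inner_sub_right, real_inner_smul_right, real_inner_self_eq_norm_sq, hγ']
        field_simp; ring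
      have h1 := stepA _ hz
      have h2 : ⟪p - γ' • α, p - γ' • α⟫_ℝ = 0 := by
        rw [inner_sub_left, real_inner_smul_left, h1, hz]; ring
      have h3 : p - γ' • α = 0 := by
        have := inner_self_eq_zero (𝕜 := ℝ) (x := p - γ' • α)
        exact this.mp h2
      rw [sub_eq_zero] at h3
      exact h3
    -- Step C
    have key2 : ∀ σ : ℝ, σ = 1 ∨ σ = -1 →
        -(Gfun T lam t * ‖α‖^2) - σ * ⟪p, α⟫_ℝ ≤ 0 := by
      intro σ hσ
      have hσabs : |σ| = 1 := by rcases hσ with rfl | rfl <;> norm_num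
      apply le_of_forall_eps
      intro ε hε
      obtain ⟨η, hη, hsup⟩ := h (ε / ‖α‖) (by positivity)
      set r : ℝ := η / (2 * ‖α‖) with hr
      have hr0 : 0 < r := by positivity
      have hyx : (x + (r * σ) • α) - x = (r * σ) • α := by abel
      have hnyx : ‖(x + (r * σ) • α) - x‖ = r * ‖α‖ := by
        rw [hyx, norm_smul, Real.norm_eq_abs, abs_mul, hσabs, abs_of_pos hr0]; ring
      have hre : r * ‖α‖ = η / 2 := by
        rw [hr]; field_simp
      have hlt : ‖(x + (r * σ) • α) - x‖ < η := by
        rw [hnyx, hre]; linarith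
      have hcond := hsup t ⟨ht0, htT⟩ (x + (r * σ) • α) (by simpa using hη) hlt
      have hay : ⟪α, x + (r * σ) • α⟫_ℝ = r * σ * ‖α‖^2 := by
        rw [inner_add_right, real_inner_smul_right, hx, real_inner_self_eq_norm_sq]; ring
      have habs : |⟪α, x + (r * σ) • α⟫_ℝ| = r * ‖α‖^2 := by
        rw [hay, abs_mul, abs_mul, hσabs, abs_of_pos hr0, abs_of_nonneg (by positivity : (0:ℝ) ≤ ‖α‖^2)]
        ring
      rw [hW, hWx, habs, hnyx, hyx, real_inner_smul_right] at hcond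
      simp only [sub_self, abs_zero, add_zero, mul_zero] at hcond
      have h2 : -(Gfun T lam t * (r * ‖α‖^2)) - r * σ * ⟪p, α⟫_ℝ ≤ ε / ‖α‖ * (r * ‖α‖) := by
        linarith
      have h3 : ε / ‖α‖ * (r * ‖α‖) = ε * r := by field_simp
      rw [h3] at h2
      nlinarith
    have hpa : |⟪p, α⟫_ℝ| ≤ Gfun T lam t * ‖α‖^2 := by
      have k1 := key2 1 (Or.inl rfl)
      have k2 := key2 (-1) (Or.inr rfl)
      rw [abs_le]; constructor <;> nlinarith
    -- Step D
    have key3 : ∀ σ : ℝ, σ = 1 ∨ σ = -1 →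
        σ * ((1 / 2) * ⟪β, α⟫_ℝ ^ 2 * (Gfun T lam t)^2 - a) ≤ 0 := by
      intro σ hσ
      have hσabs : |σ| = 1 := by rcases hσ with rfl | rfl <;> norm_num
      apply le_of_forall_eps
      intro ε hε
      have hδ : (0:ℝ) < ε / 2 := by linarith
      obtain ⟨η₁, hη₁, hsup⟩ := h (ε / 2) hδ
      obtain ⟨η₂, hη₂, hder⟩ := deriv_eps hFd hδ
      obtain ⟨μ, hμ0, hμη₁, hμη₂, hμt, hμT⟩ :
          ∃ μ : ℝ, 0 < μ ∧ μ < η₁ ∧ μ < η₂ ∧ μ < t ∧ μ < T - t := by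
        have h1 : 0 < min (min η₁ η₂) (min t (T - t)) :=
          lt_min (lt_min hη₁ hη₂) (lt_min ht0 (by linarith))
        refine ⟨min (min η₁ η₂) (min t (T - t)) / 2, by linarith, ?_, ?_, ?_, ?_⟩
        · have : min (min η₁ η₂) (min t (T - t)) ≤ η₁ :=
            le_trans (min_le_left _ _) (min_le_left _ _)
          linarith
        · have : min (min η₁ η₂) (min t (T - t)) ≤ η₂ :=
            le_trans (min_le_left _ _) (min_le_right _ _)
          linarith
        · have : min (min η₁ η₂) (min t (T - t)) ≤ t :=
            le_trans (min_le_right _ _) (min_le_left _ _)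
          linarith
        · have : min (min η₁ η₂) (min t (T - t)) ≤ T - t :=
            le_trans (min_le_right _ _) (min_le_right _ _)
          linarith
      have hσμ : σ * μ ≤ μ ∧ -μ ≤ σ * μ := by
        rcases hσ with rfl | rfl <;> constructor <;> linarith
      have habsst : |t + σ * μ - t| = μ := by
        have : t + σ * μ - t = σ * μ := by ring
        rw [this, abs_mul, hσabs, abs_of_pos hμ0]; ring
      have hsIoo : t + σ * μ ∈ Set.Ioo (0:ℝ) T :=
        ⟨by linarith [hσμ.2], by linarith [hσμ.1]⟩
      have hcond := hsup (t + σ * μ) hsIoo x (by rw [habsst]; exact hμη₁)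
        (by simpa using hη₁)
      rw [hWx, hWx] at hcond
      simp only [sub_self, inner_zero_right, norm_zero, abs_zero, zero_add, habsst] at hcond
      have hderc := hder (t + σ * μ) (by rw [habsst]; exact hμη₂)
      rw [habsst] at hderc
      have hst : t + σ * μ - t = σ * μ := by ring
      rw [hst] at hcond hderc
      have habs2 := abs_le.mp hderc
      have hfin : (σ * ((1 / 2) * ⟪β, α⟫_ℝ ^ 2 * (Gfun T lam t)^2 - a)) * μ ≤ ε * μ := by
        linarith [habs2.1, hcond]
      exact le_of_mul_le_mul_right hfin hμ0
    have ha : a = (1 / 2) * ⟪β, α⟫_ℝ ^ 2 * (Gfun T lam t)^2 := by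
      have k1 := key3 1 (Or.inl rfl)
      have k2 := key3 (-1) (Or.inr rfl)
      nlinarith
    -- assemble
    refine ⟨⟪α, p⟫_ℝ / (‖α‖^2 * Gfun T lam t), ?_, ?_⟩
    · have habs : |⟪α, p⟫_ℝ / (‖α‖^2 * Gfun T lam t)| ≤ 1 := by
        rw [abs_div, abs_of_pos (mul_pos (by positivity) hGt)]
        rw [div_le_one (mul_pos (by positivity) hGt)]
        calc |⟪α, p⟫_ℝ| = |⟪p, α⟫_ℝ| := by rw [real_inner_comm]
        _ ≤ Gfun T lam t * ‖α‖^2 := hpa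
        _ = ‖α‖^2 * Gfun T lam t := by ring
      exact abs_le.mp habs
    · have hcoef : ⟪α, p⟫_ℝ / (‖α‖^2 * Gfun T lam t) * Gfun T lam t = ⟪α, p⟫_ℝ / ‖α‖^2 := by
        field_simp
      rw [Prod.mk.injEq]
      refine ⟨ha, ?_⟩
      rw [hcoef]
      exact hp
  · -- easy direction
    rintro ⟨γ, hγ, hap⟩
    rw [Prod.mk.injEq] at hap
    obtain ⟨rfl, rfl⟩ := hap
    intro δ hδ
    obtain ⟨η₁, hη₁0, hG1⟩ := Metric.continuousAt_iff.mp (hGcont.continuousAt (x := t))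
      (δ / (2 * ‖α‖)) (by positivity)
    obtain ⟨η₂, hη₂0, hder⟩ := deriv_eps hFd (show (0:ℝ) < δ/2 by linarith)
    refine ⟨min η₁ η₂, lt_min hη₁0 hη₂0, ?_⟩
    intro s hs y hst hyx
    have hG1' : |Gfun T lam s - Gfun T lam t| ≤ δ / (2 * ‖α‖) := by
      have := hG1 (x := s) (by rw [Real.dist_eq]; exact lt_of_lt_of_le hst (min_le_left _ _))
      rw [Real.dist_eq] at this
      linarith
    have hder' := hder s (lt_of_lt_of_le hst (min_le_right _ _))
    have hAy : ⟪α, y⟫_ℝ = ⟪α, y - x⟫_ℝ := by rw [inner_sub_right, hx]; ring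
    rw [hW, hWx, real_inner_smul_left, hAy]
    have habsA : |⟪α, y - x⟫_ℝ| ≤ ‖α‖ * ‖y - x‖ := abs_real_inner_le_norm α (y - x)
    have h1 : -(γ * Gfun T lam t * ⟪α, y - x⟫_ℝ) ≤ Gfun T lam t * |⟪α, y - x⟫_ℝ| := by
      calc -(γ * Gfun T lam t * ⟪α, y - x⟫_ℝ) ≤ |γ * Gfun T lam t * ⟪α, y - x⟫_ℝ| :=
            neg_le_abs _
      _ = |γ| * (Gfun T lam t * |⟪α, y - x⟫_ℝ|) := by
            rw [abs_mul, abs_mul, abs_of_pos hGt]; ring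
      _ ≤ 1 * (Gfun T lam t * |⟪α, y - x⟫_ℝ|) := by
            apply mul_le_mul_of_nonneg_right (abs_le.mpr hγ)
            exact mul_nonneg hGt.le (abs_nonneg _)
      _ = Gfun T lam t * |⟪α, y - x⟫_ℝ| := one_mul _
    have habs2 := abs_le.mp hder'
    have h2 : -(F s - F t) - (s - t) * ((1 / 2) * ⟪β, α⟫_ℝ ^ 2 * (Gfun T lam t)^2) ≤ δ/2 * |s - t| := by
      have := habs2.1
      linarith
    have h31 : Gfun T lam t - Gfun T lam s ≤ δ / (2 * ‖α‖) := by
      have := abs_le.mp hG1'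
      linarith [this.1]
    have h32 : (Gfun T lam t - Gfun T lam s) * |⟪α, y - x⟫_ℝ| ≤
        (δ / (2 * ‖α‖)) * |⟪α, y - x⟫_ℝ| :=
      mul_le_mul_of_nonneg_right h31 (abs_nonneg _)
    have h33 : (δ / (2 * ‖α‖)) * |⟪α, y - x⟫_ℝ| ≤ (δ / (2 * ‖α‖)) * (‖α‖ * ‖y - x‖) :=
      mul_le_mul_of_nonneg_left habsA (by positivity)
    have h34 : (δ / (2 * ‖α‖)) * (‖α‖ * ‖y - x‖) = (δ/2) * ‖y - x‖ := by
      field_simp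
    have h3 : (Gfun T lam t - Gfun T lam s) * |⟪α, y - x⟫_ℝ| ≤ (δ/2) * ‖y - x‖ := by
      calc _ ≤ (δ / (2 * ‖α‖)) * |⟪α, y - x⟫_ℝ| := h32
      _ ≤ (δ / (2 * ‖α‖)) * (‖α‖ * ‖y - x‖) := h33
      _ = (δ/2) * ‖y - x‖ := h34
    have hn1 : (0:ℝ) ≤ δ * ‖y - x‖ := mul_nonneg hδ.le (norm_nonneg _)
    have hn2 : (0:ℝ) ≤ δ * |s - t| := mul_nonneg hδ.le (abs_nonneg _)
    linarith [h1, h2, h3, hn1, hn2]
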